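/- Let X be a standard Borel space and n ∈ ℕ. The pair (M_n X, coeq_n), where coeq_n : X^n → M_n X sends a tuple to its multiset, is a coequaliser in Stoch of the family of all coordinate-permutation kernels σ̇ : X^n → X^n for σ ∈ S_n. -/

import Mathlib

open ProbabilityTheory MeasureTheory
open scoped ENNReal

/-- Scalar multiple of a kernel by a constant in `ℝ≥0∞`. -/
noncomputable def ksmul {α β : Type*} [MeasurableSpace α] [MeasurableSpace β]
    (c : ℝ≥0∞) (κ : Kernel α β) : Kernel α β :=
  ⟨fun a => c • κ a, Measure.measurable_of_measurable_coe _ (fun s hs => by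
    simpa [Measure.smul_apply, smul_eq_mul] using (κ.measurable_coe hs).const_mul c)⟩

/-- The quotient map `X^n → M_n X` sending a tuple to its underlying multiset of size `n`. -/
def coeqFun {X : Type*} (n : ℕ) : (Fin n → X) → Sym X n :=
  fun a => ⟨(List.ofFn a : Multiset X), by simp⟩

/-- `M_n X`, the space of size-`n` multisets over `X`, carries the quotient σ-algebra
induced by the map `coeqFun`. -/
noncomputable instance symMeasurableSpace {X : Type*} [MeasurableSpace X] (n : ℕ) :
    MeasurableSpace (Sym X n) :=
  MeasurableSpace.map (coeqFun n) inferInstance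

theorem coeqFun_measurable {X : Type*} [MeasurableSpace X] (n : ℕ) :
    Measurable (coeqFun (X := X) n) := fun _ h => h

/-- The deterministic kernel permuting the coordinates of a tuple according to `σ`. -/
noncomputable def permKernel {X : Type*} [MeasurableSpace X] {n : ℕ}
    (σ : Equiv.Perm (Fin n)) : Kernel (Fin n → X) (Fin n → X) :=
  Kernel.deterministic (fun a => a ∘ σ) (by fun_prop)

/-- The kernel `eq_n = (1/n!) Σ_{σ ∈ S_n} σ̇ ∘ ord : M_n X → X^n`. -/
noncomputable def eqKernel {X : Type*} [MeasurableSpace X] (n : ℕ)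
    (ord : Sym X n → (Fin n → X)) (hord : Measurable ord) :
    Kernel (Sym X n) (Fin n → X) :=
  ksmul ((n.factorial : ℝ≥0∞))⁻¹
    (∑ σ : Equiv.Perm (Fin n), permKernel σ ∘ₖ Kernel.deterministic ord hord)



lemma exists_perm_of_ofFn_perm {X : Type*} : ∀ {n : ℕ} (a b : Fin n → X),
    (List.ofFn b).Perm (List.ofFn a) → ∃ σ : Equiv.Perm (Fin n), b = a ∘ σ := by
  intro n
  induction n with
  | zero => exact fun a b _ => ⟨1, funext fun i => i.elim0⟩
  | succ n ih =>
    intro a b hperm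
    have hb0 : b 0 ∈ List.ofFn a := hperm.mem_iff.mp (by simp [List.mem_ofFn])
    obtain ⟨j, hj⟩ := List.mem_ofFn.mp hb0
    set τ : Equiv.Perm (Fin (n + 1)) := Equiv.swap 0 j with hτ
    have hperm2 : (List.ofFn b).Perm (List.ofFn (a ∘ τ)) :=
      hperm.trans (Equiv.Perm.ofFn_comp_perm τ a).symm
    have h0 : (a ∘ τ) 0 = b 0 := by simp [hτ, Equiv.swap_apply_left, hj]
    rw [List.ofFn_succ, List.ofFn_succ, h0] at hperm2
    have htail := hperm2.cons_inv
    obtain ⟨σ', hσ'⟩ := ih (fun i => (a ∘ τ) i.succ) (fun i => b i.succ) htail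
    set ρ : Equiv.Perm (Fin (n + 1)) := Equiv.Perm.decomposeFin.symm (0, σ') with hρ
    refine ⟨ρ.trans τ, funext fun i => ?_⟩
    refine Fin.cases ?_ (fun x => ?_) i
    · simp only [Function.comp_apply, Equiv.trans_apply, Equiv.Perm.decomposeFin_symm_apply_zero, Equiv.swap_apply_left]
      exact hj.symm
    · have := congrFun hσ' x
      simp only [Function.comp] at this ⊢
      rw [Equiv.trans_apply]
      rw [hρ]
      rw [Equiv.Perm.decomposeFin_symm_apply_succ]
      simpa using this

theorem coeqFun_comp_perm {X : Type*} {n : ℕ} (σ : Equiv.Perm (Fin n)) (a : Fin n → X) :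
    coeqFun n (a ∘ σ) = coeqFun n a := by
  apply Subtype.ext
  exact Quot.sound (Equiv.Perm.ofFn_comp_perm σ a)

theorem exists_perm_of_coeqFun_eq {X : Type*} {n : ℕ} {a b : Fin n → X}
    (h : coeqFun n b = coeqFun n a) : ∃ σ : Equiv.Perm (Fin n), b = a ∘ σ :=
  exists_perm_of_ofFn_perm a b (Multiset.coe_eq_coe.mp (congrArg Subtype.val h))

/-- `(M_n X, coeq_n)` is a coequaliser in `Stoch` of the coordinate-permutation kernels
`σ̇ : X^n → X^n`, `σ ∈ S_n`: the deterministic kernel `coeq_n` coequalises all `σ̇`, and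
every Markov kernel `g : X^n → A` coequalising all `σ̇` factors uniquely through `coeq_n`
via a Markov kernel. -/
theorem stmt_7 {X : Type*} [MeasurableSpace X] [StandardBorelSpace X] (n : ℕ)
    (ord : Sym X n → (Fin n → X)) (hord : Measurable ord)
    (hsec : ∀ m : Sym X n, coeqFun n (ord m) = m) :
    (∀ σ : Equiv.Perm (Fin n),
        Kernel.deterministic (coeqFun (X := X) n) (coeqFun_measurable n) ∘ₖ permKernel σ
          = Kernel.deterministic (coeqFun (X := X) n) (coeqFun_measurable n)) ∧
    ∀ (A : Type) (_ : MeasurableSpace A) (g : Kernel (Fin n → X) A), IsMarkovKernel g →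
      (∀ σ : Equiv.Perm (Fin n), g ∘ₖ permKernel σ = g) →
      ∃! h : Kernel (Sym X n) A,
        IsMarkovKernel h ∧ h ∘ₖ Kernel.deterministic (coeqFun (X := X) n) (coeqFun_measurable n) = g := by
  constructor
  · intro σ
    rw [permKernel, Kernel.deterministic_comp_deterministic]
    ext a : 1
    simp only [Kernel.deterministic_apply, Function.comp_apply, coeqFun_comp_perm]
  · intro A _ g hg hcoeq
    refine ⟨g.comap ord hord, ⟨?_, ?_⟩, ?_⟩
    · exact ⟨fun m => by rw [Kernel.comap_apply]; exact hg.isProbabilityMeasure _⟩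
    · ext a : 1
      rw [Kernel.comp_deterministic_eq_comap, Kernel.comap_apply, Kernel.comap_apply]
      obtain ⟨σ, hσ⟩ := exists_perm_of_coeqFun_eq (hsec (coeqFun n a))
      rw [hσ]
      have := DFunLike.congr_fun (hcoeq σ) a
      simpa [permKernel, Kernel.comp_deterministic_eq_comap, Kernel.comap_apply] using this
    · rintro h' ⟨_, hfac⟩
      ext m : 1
      have := DFunLike.congr_fun hfac (ord m)
      rw [Kernel.comp_deterministic_eq_comap, Kernel.comap_apply, hsec m] at this
      rw [Kernel.comap_apply]
      exact this
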